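/- For every real k and every r ≥ 0, the inequality |(1 − i k r) e^{i k r} − 1| ≤ k² r² holds. -/

import Mathlib

open Complex

lemma aux_deriv (t : ℝ) :
    HasDerivAt (fun s : ℝ => (1 - Complex.I * s) * Complex.exp (Complex.I * s))
      (t * Complex.exp (Complex.I * t)) t := by
  have h1 : HasDerivAt (fun s : ℝ => (s : ℂ)) 1 t := Complex.ofRealCLM.hasDerivAt
  have h2 : HasDerivAt (fun s : ℝ => Complex.I * s) Complex.I t := by
    simpa using h1.const_mul Complex.I
  have h3 : HasDerivAt (fun s : ℝ => Complex.exp (Complex.I * s))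
      (Complex.exp (Complex.I * t) * Complex.I) t := h2.cexp
  have h4 : HasDerivAt (fun s : ℝ => (1 : ℂ) - Complex.I * s) (-Complex.I) t := by
    simpa using h2.const_sub 1
  have := h4.mul h3
  refine HasDerivAt.congr_deriv this ?_
  have : Complex.I * Complex.I = -1 := Complex.I_mul_I
  linear_combination -(t:ℂ) * Complex.exp (Complex.I * t) * this

lemma aux (T : ℝ) :
    ‖(1 - Complex.I * T) * Complex.exp (Complex.I * T) - 1‖ ≤ T ^ 2 := by
  have hconv : Convex ℝ (Set.uIcc (0:ℝ) T) := convex_uIcc _ _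
  have hbound : ∀ s ∈ Set.uIcc (0:ℝ) T,
      ‖(s : ℂ) * Complex.exp (Complex.I * s)‖ ≤ |T| := by
    intro s hs
    rw [norm_mul]
    have he : ‖Complex.exp (Complex.I * s)‖ = 1 := by
      rw [Complex.norm_exp]
      simp
    rw [he, mul_one]
    simp only [Complex.norm_real, Real.norm_eq_abs]
    rw [Set.uIcc_comm, Set.mem_uIcc] at hs
    rcases hs with ⟨h1, h2⟩ | ⟨h1, h2⟩ <;> rw [abs_le] <;>
      constructor <;> nlinarith [abs_nonneg T, le_abs_self T, neg_abs_le T]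
  have key := hconv.norm_image_sub_le_of_norm_hasDerivWithin_le
    (f := fun s : ℝ => (1 - Complex.I * s) * Complex.exp (Complex.I * s))
    (f' := fun s : ℝ => (s : ℂ) * Complex.exp (Complex.I * s))
    (fun s _ => (aux_deriv s).hasDerivWithinAt) hbound
    (Set.right_mem_uIcc) (Set.left_mem_uIcc)
  have : ‖(1 - Complex.I * T) * Complex.exp (Complex.I * T) - 1‖ ≤ |T| * |0 - T| := by
    rw [show ((1:ℂ) - Complex.I * T) * Complex.exp (Complex.I * T) - 1 =
      -((1 - (1 - Complex.I * T) * Complex.exp (Complex.I * T))) by ring, norm_neg]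
    simpa using key
  calc ‖(1 - Complex.I * T) * Complex.exp (Complex.I * T) - 1‖
      ≤ |T| * |0 - T| := this
    _ = T ^ 2 := by rw [abs_sub_comm]; simp [_root_.sq_abs, sq]

theorem exp_taylor_estimate (k r : ℝ) (hr : 0 ≤ r) :
    ‖(1 - Complex.I * k * r) * Complex.exp (Complex.I * k * r) - 1‖ ≤ k ^ 2 * r ^ 2 := by
  have := aux (k * r)
  have e : (Complex.I * ↑(k * r)) = Complex.I * k * r := by push_cast; ring
  rw [e] at this
  calc ‖(1 - Complex.I * k * r) * Complex.exp (Complex.I * k * r) - 1‖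
      ≤ (k * r) ^ 2 := by
        convert this using 4 <;> push_cast <;> ring
    _ = k ^ 2 * r ^ 2 := by ring
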